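/- Let (x_i, f_i) be a Schauder frame of a Banach space X, and let Y denote the closed linear span of (f_i)_{i∈ℕ} in X*. Then the following are equivalent: (a) the frame (x_i, f_i) is pre-shrinking; (b) (f_i, x_i) is a Schauder frame of X* (i.e., for every f ∈ X*, f = Σ_{i=1}^∞ f(x_i) f_i in norm) and for every x*** ∈ X*** the series Σ_{i=1}^∞ x***(x_i) f_i converges in norm in X*; (c) (f_i, x_i) is a Schauder frame of Y (i.e., every g ∈ Y satisfies g = Σ_{i=1}^∞ g(x_i) f_i in norm, where x_i acts on Y by restriction) and for every ψ ∈ Y** the series Σ_{i=1}^∞ ψ(x_i|_Y) f_i converges in norm in Y. -/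

import Mathlib

open Filter Topology

/-- The functional on a subspace `Y ⊆ X*` given by evaluation at `v ∈ X`
(the restriction `v|_Y`). -/
noncomputable def restrictEval {X : Type*} [NormedAddCommGroup X] [NormedSpace ℝ X]
    (Y : Submodule ℝ (X →L[ℝ] ℝ)) (v : X) : ↥Y →L[ℝ] ℝ :=
  (NormedSpace.inclusionInDoubleDual ℝ X v).comp Y.subtypeL

/-- Port helper: the (unchanged) additive group structure `Submodule.addCommGroup` on a subspace
of `X*`, registered so that instance search finds it for the topology on `Y →L[ℝ] ℝ`. -/
noncomputable instance submoduleDualAddCommGroupPort {X : Type*} [NormedAddCommGroup X]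
    [NormedSpace ℝ X] (Y : Submodule ℝ (X →L[ℝ] ℝ)) : AddCommGroup ↥Y :=
  Submodule.addCommGroup Y

set_option maxHeartbeats 2000000 in
set_option synthInstance.maxHeartbeats 400000 in
/-- Let `(x i, f i)` be a Schauder frame of a Banach space `X` and let
`Y` be the closed linear span of `(f i)` in `X*`. TFAE:
(a) the frame is pre-shrinking;
(b) `(f i, x i)` is a Schauder frame of `X*` and for every `x*** ∈ X***` the series
`∑ x***(x i) • f i` converges in norm in `X*`;
(c) `(f i, x i)` is a Schauder frame of `Y` and for every `ψ ∈ Y**` the series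
`∑ ψ(x i|_Y) • f i` converges in norm in `Y`. -/
theorem schauderFrame_preShrinking_tfae
    {X : Type*} [NormedAddCommGroup X] [NormedSpace ℝ X] [CompleteSpace X]
    (x : ℕ → X) (f : ℕ → X →L[ℝ] ℝ)
    (hx : ∀ i, x i ≠ 0) (hf : ∀ i, f i ≠ 0)
    (hframe : ∀ v : X,
      Tendsto (fun n => ∑ i ∈ Finset.range n, f i v • x i) atTop (𝓝 v)) :
    List.TFAE
      [ (∀ g : X →L[ℝ] ℝ,
          Tendsto (fun n => ∑ i ∈ Finset.range n, g (x i) • f i) atTop (𝓝 g)),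
        ((∀ g : X →L[ℝ] ℝ,
            Tendsto (fun n => ∑ i ∈ Finset.range n, g (x i) • f i) atTop (𝓝 g)) ∧
          ∀ F : ((X →L[ℝ] ℝ) →L[ℝ] ℝ) →L[ℝ] ℝ, ∃ h : X →L[ℝ] ℝ,
            Tendsto
              (fun n => ∑ i ∈ Finset.range n,
                F (NormedSpace.inclusionInDoubleDual ℝ X (x i)) • f i) atTop (𝓝 h)),
        ((∀ g ∈ (Submodule.span ℝ (Set.range f)).topologicalClosure,
            Tendsto (fun n => ∑ i ∈ Finset.range n, g (x i) • f i) atTop (𝓝 g)) ∧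
          ∀ ψ : (↥((Submodule.span ℝ (Set.range f)).topologicalClosure) →L[ℝ] ℝ) →L[ℝ] ℝ,
            ∃ h ∈ (Submodule.span ℝ (Set.range f)).topologicalClosure,
              Tendsto
                (fun n => ∑ i ∈ Finset.range n,
                  ψ (restrictEval ((Submodule.span ℝ (Set.range f)).topologicalClosure)
                      (x i)) • f i) atTop (𝓝 h)) ] := by
  set Y := (Submodule.span ℝ (Set.range f)).topologicalClosure with hYdef
  letI : SeminormedAddCommGroup (X →L[ℝ] ℝ) := inferInstance
  letI : NormedSpace ℝ (X →L[ℝ] ℝ) := inferInstance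
  -- each f i belongs to Y
  have hfY : ∀ i, f i ∈ Y :=
    fun i => Submodule.le_topologicalClosure _ (Submodule.subset_span ⟨i, rfl⟩)
  -- partial sums belong to Y
  have hsumY : ∀ (c : ℕ → ℝ) (n : ℕ), (∑ i ∈ Finset.range n, c i • f i) ∈ Y :=
    fun c n => Submodule.sum_mem _ fun i _ => Submodule.smul_mem _ _ (hfY i)
  -- evaluation of partial sums
  have heval : ∀ (g : X →L[ℝ] ℝ) (v : X) (n : ℕ),
      (∑ i ∈ Finset.range n, g (x i) • f i) v = g (∑ i ∈ Finset.range n, f i v • x i) := by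
    intro g v n
    simp [map_sum, smul_eq_mul, mul_comm]
  have hevalT : ∀ (g : X →L[ℝ] ℝ) (v : X),
      Tendsto (fun n => (∑ i ∈ Finset.range n, g (x i) • f i) v) atTop (𝓝 (g v)) := by
    intro g v
    have := (g.continuous.tendsto v).comp (hframe v)
    simpa [Function.comp_def, heval] using this
  -- weak-* uniqueness of the limit
  have huniq : ∀ (g h : X →L[ℝ] ℝ),
      Tendsto (fun n => ∑ i ∈ Finset.range n, g (x i) • f i) atTop (𝓝 h) → h = g := by
    intro g h hconv
    ext v
    have h1 : Tendsto (fun n => (∑ i ∈ Finset.range n, g (x i) • f i) v) atTop (𝓝 (h v)) :=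
      ((ContinuousLinearMap.apply ℝ ℝ v).continuous.tendsto h).comp hconv
    exact tendsto_nhds_unique h1 (hevalT g v)
  -- restrictEval applied
  have hre : ∀ (v : X) (φ : ↥Y), restrictEval Y v φ = (φ : X →L[ℝ] ℝ) v := fun v φ => rfl
  -- the continuous linear map `v ↦ v|_Y`
  let A : X →L[ℝ] (↥Y →L[ℝ] ℝ) :=
    ((ContinuousLinearMap.compL ℝ ↥Y (X →L[ℝ] ℝ) ℝ).flip Y.subtypeL).comp
      (NormedSpace.inclusionInDoubleDual ℝ X)
  have hAapp : ∀ v : X, A v = restrictEval Y v := fun v => rfl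
  -- A is injective thanks to the frame property
  have hA0 : ∀ v : X, A v = 0 → v = 0 := by
    intro v hv
    have h0 : ∀ i, f i v = 0 := by
      intro i
      have : A v ⟨f i, hfY i⟩ = 0 := by rw [hv]; rfl
      simpa [hAapp, hre] using this
    have := hframe v
    simp only [h0, zero_smul, Finset.sum_const_zero] at this
    exact (tendsto_nhds_unique tendsto_const_nhds this).symm
  have hAinj : Function.Injective (A.toLinearMap) := by
    rw [injective_iff_map_eq_zero]
    exact fun v hv => hA0 v hv
  tfae_have 1 → 2
  | ha => by
    refine ⟨ha, fun F => ⟨F.comp (NormedSpace.inclusionInDoubleDual ℝ X), ?_⟩⟩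
    exact ha (F.comp (NormedSpace.inclusionInDoubleDual ℝ X))
  tfae_have 2 → 1
  | hb => hb.1
  tfae_have 1 → 3
  | ha => by
    refine ⟨fun g _ => ha g, fun ψ => ?_⟩
    set g := ψ.comp A with hg
    have hgi : ∀ i, ψ (restrictEval Y (x i)) = g (x i) := by
      intro i; rw [hg]; rfl
    have hconv := ha g
    refine ⟨g, ?_, by simpa only [hgi] using hconv⟩
    exact (Submodule.isClosed_topologicalClosure _).mem_of_tendsto hconv
      (Eventually.of_forall fun n => hsumY _ n)
  tfae_have 3 → 1
  | ⟨hc1, hc2⟩ => by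
    intro g
    -- uniform bound on the partial sums (Banach–Steinhaus)
    obtain ⟨C, hC⟩ :
        ∃ C, ∀ n, ‖∑ i ∈ Finset.range n, g (x i) • f i‖ ≤ C := by
      apply banach_steinhaus (g := fun n => ∑ i ∈ Finset.range n, g (x i) • f i)
      intro v
      obtain ⟨b, hb⟩ := ((hevalT g v).norm).bddAbove_range
      exact ⟨b, fun n => hb ⟨n, rfl⟩⟩
    -- key estimate: |g v| ≤ C * ‖v|_Y‖
    have hkey : ∀ v : X, |g v| ≤ C * ‖restrictEval Y v‖ := by
      intro v
      have hb : ∀ n, |(∑ i ∈ Finset.range n, g (x i) • f i) v| ≤ C * ‖restrictEval Y v‖ := by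
        intro n
        have hmem := hsumY (fun i => g (x i)) n
        have he : (∑ i ∈ Finset.range n, g (x i) • f i) v
            = restrictEval Y v ⟨_, hmem⟩ := (hre v ⟨_, hmem⟩).symm
        rw [he, ← Real.norm_eq_abs]
        calc ‖restrictEval Y v ⟨_, hmem⟩‖
            ≤ ‖restrictEval Y v‖ * ‖(⟨_, hmem⟩ : ↥Y)‖ := (restrictEval Y v).le_opNorm _
          _ ≤ ‖restrictEval Y v‖ * C := by
              gcongr
              exact hC n
          _ = C * ‖restrictEval Y v‖ := mul_comm _ _
      exact le_of_tendsto (hevalT g v).abs (Eventually.of_forall hb)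
    -- build ψ ∈ Y** extending `A v ↦ g v` by Hahn–Banach
    set M := LinearMap.range A.toLinearMap with hM
    letI instE : SeminormedAddCommGroup (↥Y →L[ℝ] ℝ) := inferInstance
    letI instE2 : NormedSpace ℝ (↥Y →L[ℝ] ℝ) := inferInstance
    letI : SeminormedAddCommGroup ↥M :=
      @Submodule.seminormedAddCommGroup ℝ (↥Y →L[ℝ] ℝ) _ _ _ M
    letI : NormedSpace ℝ ↥M :=
      @Submodule.normedSpace ℝ ℝ _ _ _ (↥Y →L[ℝ] ℝ) _ _ _ _ M
    let e : X ≃ₗ[ℝ] ↥M := LinearEquiv.ofInjective A.toLinearMap hAinj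
    let ψ₀lin : ↥M →ₗ[ℝ] ℝ := g.toLinearMap.comp e.symm.toLinearMap
    have hψ₀ : ∀ z : ↥M, ‖ψ₀lin z‖ ≤ C * ‖z‖ := by
      intro z
      have hz : (z : ↥Y →L[ℝ] ℝ) = A (e.symm z) := by
        conv_lhs => rw [← e.apply_symm_apply z]
        rfl
      have h1 : ψ₀lin z = g (e.symm z) := rfl
      rw [h1, Real.norm_eq_abs]
      calc |g (e.symm z)| ≤ C * ‖restrictEval Y (e.symm z)‖ := hkey _
        _ = C * ‖z‖ := by rw [← hAapp, ← hz]; rfl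
    let ψ₀ : ↥M →L[ℝ] ℝ := LinearMap.mkContinuous ψ₀lin C hψ₀
    obtain ⟨ψ, hψ, -⟩ := exists_extension_norm_eq M ψ₀
    have hψx : ∀ i, ψ (restrictEval Y (x i)) = g (x i) := by
      intro i
      have h1 : restrictEval Y (x i) = ((e (x i) : ↥M) : ↥Y →L[ℝ] ℝ) := by
        rw [← hAapp]; rfl
      rw [h1, hψ (e (x i))]
      show ψ₀lin (e (x i)) = g (x i)
      simp [ψ₀lin]
    obtain ⟨h, hhY, hconv⟩ := hc2 ψ
    have hconv' : Tendsto (fun n => ∑ i ∈ Finset.range n, g (x i) • f i) atTop (𝓝 h) := by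
      simpa only [hψx] using hconv
    have := huniq g h hconv'
    rw [this] at hconv'
    exact hconv'
  tfae_finish
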